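/- For a set functor F, the following are equivalent: (1) F preserves inverse images; (2) F admits a normal lax extension, and every normal lax extension of F preserves composition with partial monomorphisms; (3) F admits a normal lax extension that preserves composition with partial monomorphisms; (4) F preserves empty intersections, admits a normal lax extension, and every normal lax extension of F preserves composition with subidentities; (5) F preserves empty intersections and admits a normal lax extension that preserves composition with subidentities. -/

import Mathlib

open CategoryTheory Function

universe u

/-- Applicative composition of relations: `relComp s r = s · r`. -/
def relComp {X Y Z : Type u} (s : Y → Z → Prop) (r : X → Y → Prop) : X → Z → Prop :=
  fun x z => ∃ y, r x y ∧ s y z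

/-- Converse of a relation. -/
def relConv {X Y : Type u} (r : X → Y → Prop) : Y → X → Prop := fun y x => r x y

/-- Graph relation of a function. -/
def fgraph {X Y : Type u} (f : X → Y) : X → Y → Prop := fun x y => f x = y

/-- An `F`-relator: a monotone assignment of relations `F X ⇸ F Y` to relations `X ⇸ Y`. -/
structure Relator (F : Type u ⥤ Type u) : Type (u + 1) where
  map : ∀ {X Y : Type u}, (X → Y → Prop) → (F.obj X → F.obj Y → Prop)
  mono : ∀ {X Y : Type u} {r s : X → Y → Prop}, (∀ x y, r x y → s x y) →
    ∀ u v, map r u v → map s u v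

/-- `f` is a coalgebra homomorphism from `(X, α)` to `(Y, β)`. -/
def IsCoalgHom (F : Type u ⥤ Type u) {X Y : Type u} (α : X → F.obj X) (β : Y → F.obj Y)
    (f : X → Y) : Prop :=
  ∀ x, β (f x) = F.map (TypeCat.ofHom f) (α x)

/-- Behavioural equivalence of states. -/
def BehEq (F : Type u ⥤ Type u) {X Y : Type u} (α : X → F.obj X) (β : Y → F.obj Y)
    (x : X) (y : Y) : Prop :=
  ∃ (Z : Type u) (γ : Z → F.obj Z) (f : X → Z) (g : Y → Z),
    IsCoalgHom F α γ f ∧ IsCoalgHom F β γ g ∧ f x = g y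

/-- `r` is a `Λ`-simulation from `(X, α)` to `(Y, β)`: `r ≤ β° · Λr · α`. -/
def IsSimulation {F : Type u ⥤ Type u} (Λ : Relator F) {X Y : Type u}
    (α : X → F.obj X) (β : Y → F.obj Y) (r : X → Y → Prop) : Prop :=
  ∀ x y, r x y → Λ.map r (α x) (β y)

/-- `x` and `y` are `Λ`-similar: related by some `Λ`-simulation. -/
def LambdaSimilar {F : Type u ⥤ Type u} (Λ : Relator F) {X Y : Type u}
    (α : X → F.obj X) (β : Y → F.obj Y) (x : X) (y : Y) : Prop :=
  ∃ r, IsSimulation Λ α β r ∧ r x y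

/-- `Λ` is a relax extension of `F`: `Ff ≤ Λf` and `(Ff)° ≤ Λ(f°)` for all functions `f`. -/
def IsRelaxExtension (F : Type u ⥤ Type u) (Λ : Relator F) : Prop :=
  ∀ {X Y : Type u} (f : X → Y),
    (∀ (u : F.obj X) (v : F.obj Y), F.map (TypeCat.ofHom f) u = v → Λ.map (fgraph f) u v) ∧
    (∀ (v : F.obj Y) (u : F.obj X), F.map (TypeCat.ofHom f) u = v → Λ.map (relConv (fgraph f)) v u)

/-- `Λ` is a lax extension of `F`: a relax extension with `Λs · Λr ≤ Λ(s · r)`. -/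
def IsLaxExtension (F : Type u ⥤ Type u) (Λ : Relator F) : Prop :=
  IsRelaxExtension F Λ ∧
    ∀ {X Y Z : Type u} (r : X → Y → Prop) (s : Y → Z → Prop)
      (u : F.obj X) (w : F.obj Z),
      relComp (Λ.map s) (Λ.map r) u w → Λ.map (relComp s r) u w

/-- `Λ` is normal: `Λ1_X = 1_{FX}` for every set `X`. -/
def IsNormal (F : Type u ⥤ Type u) (Λ : Relator F) : Prop :=
  ∀ (X : Type u) (u v : F.obj X), Λ.map (@Eq X) u v ↔ u = v

/-- The commutative square `f ∘ p = g ∘ q` is a pullback square (in `Set`). -/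
def IsPullbackSq {P X B A : Type u} (p : P → X) (q : P → B) (f : X → A) (g : B → A) : Prop :=
  (∀ w, f (p w) = g (q w)) ∧ ∀ x b, f x = g b → ∃! w, p w = x ∧ q w = b

/-- `F` preserves inverse images: it preserves every pullback of a cospan whose
second leg is injective. -/
def PreservesInverseImages (F : Type u ⥤ Type u) : Prop :=
  ∀ {P X B A : Type u} (p : P → X) (q : P → B) (f : X → A) (m : B → A),
    Function.Injective m → IsPullbackSq p q f m →
      IsPullbackSq (F.map (TypeCat.ofHom p)) (F.map (TypeCat.ofHom q)) (F.map (TypeCat.ofHom f)) (F.map (TypeCat.ofHom m))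

/-- `F` preserves empty intersections: it preserves the pullback of any two
injections with disjoint images. -/
def PreservesEmptyIntersections (F : Type u ⥤ Type u) : Prop :=
  ∀ {P A B X : Type u} (p : P → A) (q : P → B) (i : A → X) (j : B → X),
    Function.Injective i → Function.Injective j → (∀ a b, i a ≠ j b) →
    IsPullbackSq p q i j → IsPullbackSq (F.map (TypeCat.ofHom p)) (F.map (TypeCat.ofHom q)) (F.map (TypeCat.ofHom i)) (F.map (TypeCat.ofHom j))

/-- A partial monomorphism is a relation of the form `j · i°` with `i`, `j` injective. -/
def IsPartialMono {Y Z : Type u} (t : Y → Z → Prop) : Prop :=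
  ∃ (S : Type u) (i : S → Y) (j : S → Z), Function.Injective i ∧ Function.Injective j ∧
    ∀ y z, t y z ↔ ∃ s, i s = y ∧ j s = z

/-- A subidentity is a relation contained in the identity relation. -/
def IsSubId {X : Type u} (s : X → X → Prop) : Prop := ∀ x x', s x x' → x = x'

/-- `Λ` preserves composition with partial monomorphisms. -/
def PreservesPartialMonoComp (F : Type u ⥤ Type u) (Λ : Relator F) : Prop :=
  ∀ {X Y : Type u} (r : X → Y → Prop),
    (∀ {Z : Type u} (t : Y → Z → Prop), IsPartialMono t →
      ∀ (u : F.obj X) (w : F.obj Z),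
        Λ.map (relComp t r) u w ↔ relComp (Λ.map t) (Λ.map r) u w) ∧
    (∀ {W : Type u} (t' : W → X → Prop), IsPartialMono t' →
      ∀ (u : F.obj W) (v : F.obj Y),
        Λ.map (relComp r t') u v ↔ relComp (Λ.map r) (Λ.map t') u v)

/-- `Λ` preserves composition with subidentities. -/
def PreservesSubIdComp (F : Type u ⥤ Type u) (Λ : Relator F) : Prop :=
  ∀ {X Y : Type u} (r : X → Y → Prop),
    (∀ s : X → X → Prop, IsSubId s →
      ∀ (u : F.obj X) (v : F.obj Y),
        Λ.map (relComp r s) u v ↔ relComp (Λ.map r) (Λ.map s) u v) ∧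
    (∀ s' : Y → Y → Prop, IsSubId s' →
      ∀ (u : F.obj X) (v : F.obj Y),
        Λ.map (relComp s' r) u v ↔ relComp (Λ.map s') (Λ.map r) u v)

section Dev

open Classical

variable {F : Type u ⥤ Type u}

lemma mapc (F : Type u ⥤ Type u) {X Y Z : Type u} (f : X → Y) (g : Y → Z) (u : F.obj X) :
    F.map (TypeCat.ofHom g) (F.map (TypeCat.ofHom f) u) = F.map (TypeCat.ofHom (fun x => g (f x))) u :=
  (F.map_comp_apply (TypeCat.ofHom f) (TypeCat.ofHom g) u).symm

lemma mapid (F : Type u ⥤ Type u) {X : Type u} (u : F.obj X) :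
    F.map (TypeCat.ofHom (fun x : X => x)) u = u :=
  F.map_id_apply X u

lemma relext {X Y : Type u} {r s : X → Y → Prop} (h : ∀ x y, r x y ↔ s x y) : r = s :=
  funext fun x => funext fun y => propext (h x y)

/-- the canonical pullback of a cospan -/
def cpb {X B A : Type u} (f : X → A) (m : B → A) : Type u := {p : X × B // f p.1 = m p.2}

lemma cpb_isPullback {X B A : Type u} (f : X → A) (m : B → A) :
    IsPullbackSq (fun p : cpb f m => p.1.1) (fun p : cpb f m => p.1.2) f m := by
  refine ⟨fun w => w.2, fun x b h => ⟨⟨(x, b), h⟩, ⟨rfl, rfl⟩, ?_⟩⟩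
  rintro ⟨⟨x', b'⟩, h'⟩ ⟨h1, h2⟩
  cases h1; cases h2; rfl

/-- PII: transfer of elements along canonical inverse-image pullbacks -/
lemma L2 (hF : PreservesInverseImages F) {X B A : Type u} (f : X → A) (m : B → A)
    (hm : Function.Injective m) (u : F.obj X) (v : F.obj B) (h : F.map (TypeCat.ofHom f) u = F.map (TypeCat.ofHom m) v) :
    ∃ w : F.obj (cpb f m),
      F.map (TypeCat.ofHom (fun p : cpb f m => p.1.1)) w = u ∧ F.map (TypeCat.ofHom (fun p : cpb f m => p.1.2)) w = v := by
  obtain ⟨w, hw, -⟩ := (hF _ _ f m hm (cpb_isPullback f m)).2 u v h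
  exact ⟨w, hw⟩

/-- PII: F preserves injectivity -/
lemma L1 (hF : PreservesInverseImages F) {B A : Type u} (m : B → A)
    (hm : Function.Injective m) : Function.Injective (F.map (TypeCat.ofHom m)) := by
  have sq : IsPullbackSq (fun b : B => b) (fun b : B => b) m m := by
    refine ⟨fun w => rfl, fun x b h => ⟨x, ⟨rfl, hm h⟩, ?_⟩⟩
    rintro w' ⟨h1, h2⟩; exact h1.symm ▸ rfl
  intro a b hab
  obtain ⟨w, ⟨h1, h2⟩, -⟩ := (hF _ _ m m hm sq).2 a b hab
  rw [← h1, ← h2]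

end Dev
section NLE

open Classical

variable {F : Type u ⥤ Type u} {Λ : Relator F}

lemma nle_fun_iff (hL : IsLaxExtension F Λ) (hN : IsNormal F Λ) {X Y : Type u} (f : X → Y)
    (u : F.obj X) (v : F.obj Y) : Λ.map (fgraph f) u v ↔ F.map (TypeCat.ofHom f) u = v := by
  constructor
  · intro h
    have h2 : Λ.map (relConv (fgraph f)) (F.map (TypeCat.ofHom f) u) u := (hL.1 f).2 (F.map (TypeCat.ofHom f) u) u rfl
    have h3 : Λ.map (relComp (fgraph f) (relConv (fgraph f))) (F.map (TypeCat.ofHom f) u) v :=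
      hL.2 _ _ _ _ ⟨u, h2, h⟩
    have h4 : ∀ (a : Y) (b : Y), relComp (fgraph f) (relConv (fgraph f)) a b → a = b := by
      rintro a b ⟨x, hx1, hx2⟩; exact hx1.symm.trans hx2
    exact (hN Y _ _).1 (Λ.mono h4 _ _ h3)
  · exact fun h => (hL.1 f).1 u v h

lemma nle_conv_iff (hL : IsLaxExtension F Λ) (hN : IsNormal F Λ) {X Y : Type u} (f : X → Y)
    (u : F.obj X) (v : F.obj Y) : Λ.map (relConv (fgraph f)) v u ↔ F.map (TypeCat.ofHom f) u = v := by
  constructor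
  · intro h
    have h2 : Λ.map (fgraph f) u (F.map (TypeCat.ofHom f) u) := (hL.1 f).1 u _ rfl
    have h3 : Λ.map (relComp (fgraph f) (relConv (fgraph f))) v (F.map (TypeCat.ofHom f) u) :=
      hL.2 _ _ _ _ ⟨u, h, h2⟩
    have h4 : ∀ (a : Y) (b : Y), relComp (fgraph f) (relConv (fgraph f)) a b → a = b := by
      rintro a b ⟨x, hx1, hx2⟩; exact hx1.symm.trans hx2
    exact ((hN Y _ _).1 (Λ.mono h4 _ _ h3)).symm
  · exact fun h => (hL.1 f).2 v u h

/-- cospan functoriality of normal lax extensions -/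
lemma nle_cospan (hL : IsLaxExtension F Λ) (hN : IsNormal F Λ) {X Y V : Type u}
    {r : X → Y → Prop} (f : X → V) (g : Y → V) (hk : ∀ x y, r x y → f x = g y)
    {u : F.obj X} {v : F.obj Y} (h : Λ.map r u v) : F.map (TypeCat.ofHom f) u = F.map (TypeCat.ofHom g) v := by
  have h2 : Λ.map (fgraph g) v (F.map (TypeCat.ofHom g) v) := (hL.1 g).1 v _ rfl
  have h3 : Λ.map (relComp (fgraph g) r) u (F.map (TypeCat.ofHom g) v) := hL.2 _ _ _ _ ⟨v, h, h2⟩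
  have h4 : ∀ x q, relComp (fgraph g) r x q → fgraph f x q := by
    rintro x q ⟨y, hy, hgy⟩; exact (hk x y hy).trans hgy
  exact (nle_fun_iff hL hN f u _).1 (Λ.mono h4 _ _ h3)

lemma nle_inj (hL : IsLaxExtension F Λ) (hN : IsNormal F Λ) {B A : Type u} (m : B → A)
    (hm : Function.Injective m) : Function.Injective (F.map (TypeCat.ofHom m)) := by
  intro a b hab
  have h1 : Λ.map (fgraph m) a (F.map (TypeCat.ofHom m) a) := (hL.1 m).1 a _ rfl
  have h2 : Λ.map (relConv (fgraph m)) (F.map (TypeCat.ofHom m) b) b := (hL.1 m).2 _ b rfl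
  rw [hab] at h1
  have h3 : Λ.map (relComp (relConv (fgraph m)) (fgraph m)) a b :=
    hL.2 _ _ _ _ ⟨F.map (TypeCat.ofHom m) b, h1, h2⟩
  have h4 : ∀ x y, relComp (relConv (fgraph m)) (fgraph m) x y → x = y := by
    rintro x y ⟨z, hz1, hz2⟩; exact hm (hz1.trans hz2.symm)
  exact (hN B _ _).1 (Λ.mono h4 _ _ h3)

end NLE
section PM

open Classical

variable {F : Type u ⥤ Type u} {Λ : Relator F}

noncomputable def chi {B Z : Type u} (m : B → Z) : Z → ULift.{u} Bool :=
  fun z => if (∃ b, m b = z) then ULift.up true else ULift.up false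

def tt' : PUnit.{u + 1} → ULift.{u} Bool := fun _ => ULift.up true

lemma chi_sq {B Z : Type u} (m : B → Z) (hm : Function.Injective m) :
    IsPullbackSq m (fun _ : B => PUnit.unit) (chi m) tt' := by
  constructor
  · intro b; exact if_pos ⟨b, rfl⟩
  · intro z pu h
    by_cases hz : ∃ b, m b = z
    · obtain ⟨b, hb⟩ := hz
      refine ⟨b, ⟨hb, rfl⟩, ?_⟩
      rintro b' ⟨hb', -⟩; exact hm (hb'.trans hb.symm)
    · exfalso
      have : chi m z = ULift.up false := if_neg hz
      rw [this] at h
      exact Bool.noConfusion (congrArg ULift.down (h.trans rfl))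

lemma tt'_inj : Function.Injective (tt' : PUnit.{u + 1} → ULift.{u} Bool) :=
  fun a b _ => Subsingleton.elim a b

/-- if `Λ(m·s) u w` with `m` injective then `w` is in the image of `Fm` (uses PII). -/
lemma lemB (hF : PreservesInverseImages F) (hL : IsLaxExtension F Λ) (hN : IsNormal F Λ)
    {X B Z : Type u} (m : B → Z) (hm : Function.Injective m) (s : X → B → Prop)
    (u : F.obj X) (w : F.obj Z) (h : Λ.map (relComp (fgraph m) s) u w) :
    ∃ v', F.map (TypeCat.ofHom m) v' = w := by
  have key : F.map (TypeCat.ofHom (fun _ : X => (ULift.up true : ULift.{u} Bool))) u = F.map (TypeCat.ofHom (chi m)) w := by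
    refine nle_cospan hL hN _ _ ?_ h
    rintro x z ⟨b, hb, hmb⟩
    have : chi m z = ULift.up true := if_pos ⟨b, hmb⟩
    rw [this]
  have key2 : F.map (TypeCat.ofHom (chi m)) w = F.map (TypeCat.ofHom tt') (F.map (TypeCat.ofHom (fun _ : X => PUnit.unit)) u) := by
    rw [mapc]; exact key.symm
  obtain ⟨v', ⟨hv1, -⟩, -⟩ := (hF m (fun _ : B => PUnit.unit) (chi m) tt' tt'_inj (chi_sq m hm)).2
    w (F.map (TypeCat.ofHom (fun _ : X => PUnit.unit)) u) key2
  exact ⟨v', hv1⟩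

lemma lemA (hF : PreservesInverseImages F) (hL : IsLaxExtension F Λ) (hN : IsNormal F Λ)
    {X B Z : Type u} (m : B → Z) (hm : Function.Injective m) (s : X → B → Prop)
    (u : F.obj X) (w : F.obj Z) (h : Λ.map (relComp (fgraph m) s) u w) :
    ∃ v', F.map (TypeCat.ofHom m) v' = w ∧ Λ.map s u v' := by
  obtain ⟨v', hv'⟩ := lemB hF hL hN m hm s u w h
  refine ⟨v', hv', ?_⟩
  have h2 : Λ.map (relConv (fgraph m)) w v' := (hL.1 m).2 w v' hv'
  have h3 : Λ.map (relComp (relConv (fgraph m)) (relComp (fgraph m) s)) u v' :=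
    hL.2 _ _ _ _ ⟨w, h, h2⟩
  refine Λ.mono ?_ _ _ h3
  rintro x b' ⟨z, ⟨b, hb, hmb⟩, hmb'⟩
  have : b = b' := hm (hmb.trans hmb'.symm)
  exact this ▸ hb

lemma lemA' (hF : PreservesInverseImages F) (hL : IsLaxExtension F Λ) (hN : IsNormal F Λ)
    {S W Y : Type u} (i : S → W) (hi : Function.Injective i) (q : S → Y → Prop)
    (u : F.obj W) (v : F.obj Y) (h : Λ.map (relComp q (relConv (fgraph i))) u v) :
    ∃ u', F.map (TypeCat.ofHom i) u' = u ∧ Λ.map q u' v := by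
  have key : F.map (TypeCat.ofHom (chi i)) u = F.map (TypeCat.ofHom (fun _ : Y => (ULift.up true : ULift.{u} Bool))) v := by
    refine nle_cospan hL hN _ _ ?_ h
    rintro x y ⟨s', hs1, hs2⟩
    have : chi i x = ULift.up true := if_pos ⟨s', hs1⟩
    rw [this]
  have key2 : F.map (TypeCat.ofHom (chi i)) u = F.map (TypeCat.ofHom tt') (F.map (TypeCat.ofHom (fun _ : Y => PUnit.unit)) v) := by
    rw [mapc]; exact key
  obtain ⟨u', ⟨hu1, -⟩, -⟩ := (hF i (fun _ : S => PUnit.unit) (chi i) tt' tt'_inj (chi_sq i hi)).2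
    u (F.map (TypeCat.ofHom (fun _ : Y => PUnit.unit)) v) key2
  refine ⟨u', hu1, ?_⟩
  have h2 : Λ.map (fgraph i) u' u := (hL.1 i).1 u' u hu1
  have h3 : Λ.map (relComp (relComp q (relConv (fgraph i))) (fgraph i)) u' v :=
    hL.2 _ _ _ _ ⟨u, h2, h⟩
  refine Λ.mono ?_ _ _ h3
  rintro s'' y ⟨w', hw1, s', hs1, hs2⟩
  have : s' = s'' := hi (hs1.trans hw1.symm)
  exact this ▸ hs2

end PM
section PM2

open Classical

variable {F : Type u ⥤ Type u} {Λ : Relator F}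

lemma pii_to_pm (hF : PreservesInverseImages F) (hL : IsLaxExtension F Λ)
    (hN : IsNormal F Λ) : PreservesPartialMonoComp F Λ := by
  intro X Y r
  constructor
  · rintro Z t ⟨S, i, j, hi, hj, ht⟩ u w
    constructor
    · intro h
      have hrw : relComp t r = relComp (fgraph j) (relComp (relConv (fgraph i)) r) := by
        refine relext fun x z => ?_
        constructor
        · rintro ⟨y, hr, hty⟩
          obtain ⟨s, hs1, hs2⟩ := (ht y z).1 hty
          exact ⟨s, ⟨y, hr, hs1⟩, hs2⟩
        · rintro ⟨s, ⟨y, hr, hs1⟩, hs2⟩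
          exact ⟨y, hr, (ht y z).2 ⟨s, hs1, hs2⟩⟩
      rw [hrw] at h
      obtain ⟨v', hjv, hrv⟩ := lemA hF hL hN j hj _ u w h
      refine ⟨F.map (TypeCat.ofHom i) v', ?_, ?_⟩
      · have h2 : Λ.map (fgraph i) v' (F.map (TypeCat.ofHom i) v') := (hL.1 i).1 v' _ rfl
        have h3 := hL.2 _ _ _ _ ⟨v', hrv, h2⟩
        refine Λ.mono ?_ _ _ h3
        rintro x y ⟨s, ⟨y', hr, hs1⟩, hs2⟩
        have hs1' : i s = y' := hs1
        have hs2' : i s = y := hs2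
        subst hs1'; subst hs2'
        exact hr
      · have h2 : Λ.map (relConv (fgraph i)) (F.map (TypeCat.ofHom i) v') v' := (hL.1 i).2 _ v' rfl
        have h3 : Λ.map (fgraph j) v' w := (hL.1 j).1 v' w hjv
        have h4 := hL.2 _ _ _ _ ⟨v', h2, h3⟩
        refine Λ.mono ?_ _ _ h4
        rintro y z ⟨s, hs1, hs2⟩
        exact (ht y z).2 ⟨s, hs1, hs2⟩
    · rintro ⟨v, h1, h2⟩
      exact hL.2 _ _ _ _ ⟨v, h1, h2⟩
  · rintro W' t' ⟨S, i, j, hi, hj, ht⟩ u v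
    constructor
    · intro h
      have hrw : relComp r t' = relComp (relComp r (fgraph j)) (relConv (fgraph i)) := by
        refine relext fun w' y => ?_
        constructor
        · rintro ⟨x, htx, hr⟩
          obtain ⟨s, hs1, hs2⟩ := (ht w' x).1 htx
          exact ⟨s, hs1, x, hs2, hr⟩
        · rintro ⟨s, hs1, x, hs2, hr⟩
          exact ⟨x, (ht w' x).2 ⟨s, hs1, hs2⟩, hr⟩
      rw [hrw] at h
      obtain ⟨u', hiu, hru⟩ := lemA' hF hL hN i hi _ u v h
      refine ⟨F.map (TypeCat.ofHom j) u', ?_, ?_⟩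
      · have h2 : Λ.map (relConv (fgraph i)) u u' := (hL.1 i).2 u u' hiu
        have h3 : Λ.map (fgraph j) u' (F.map (TypeCat.ofHom j) u') := (hL.1 j).1 u' _ rfl
        have h4 := hL.2 _ _ _ _ ⟨u', h2, h3⟩
        refine Λ.mono ?_ _ _ h4
        rintro w'' x ⟨s, hs1, hs2⟩
        exact (ht w'' x).2 ⟨s, hs1, hs2⟩
      · have h2 : Λ.map (relConv (fgraph j)) (F.map (TypeCat.ofHom j) u') u' := (hL.1 j).2 _ u' rfl
        have h3 := hL.2 _ _ _ _ ⟨u', h2, hru⟩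
        refine Λ.mono ?_ _ _ h3
        rintro x y ⟨s, hs1, x', hs2, hr⟩
        exact (hs2.symm.trans hs1) ▸ hr
    · rintro ⟨x', h1, h2⟩
      exact hL.2 _ _ _ _ ⟨x', h1, h2⟩

lemma subid_is_pm {X : Type u} (s : X → X → Prop) (hs : IsSubId s) : IsPartialMono s := by
  refine ⟨{x : X // s x x}, Subtype.val, Subtype.val, Subtype.val_injective,
    Subtype.val_injective, fun y z => ?_⟩
  constructor
  · intro h
    have hyz : y = z := hs y z h
    exact ⟨⟨y, hyz ▸ h⟩, rfl, hyz⟩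
  · rintro ⟨⟨x, hx⟩, rfl, rfl⟩
    exact hx

lemma pm_to_subid (h : PreservesPartialMonoComp F Λ) : PreservesSubIdComp F Λ := by
  intro X Y r
  exact ⟨fun s hs u v => (h r).2 s (subid_is_pm s hs) u v,
    fun s' hs' u v => (h r).1 s' (subid_is_pm s' hs') u v⟩

lemma pii_to_pei {F : Type u ⥤ Type u} (hF : PreservesInverseImages F) :
    PreservesEmptyIntersections F := by
  intro P A B X p q i j hi hj hdisj hsq
  exact hF p q i j hj hsq

end PM2
section Converse

open Classical

variable {F : Type u ⥤ Type u} {Λ : Relator F}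

lemma pb_p_inj {P X B A : Type u} {p : P → X} {q : P → B} {f : X → A} {m : B → A}
    (hm : Function.Injective m) (hsq : IsPullbackSq p q f m) : Function.Injective p := by
  intro w w' hww
  have h1 : m (q w) = m (q w') := by rw [← hsq.1 w, ← hsq.1 w', hww]
  have hq : q w = q w' := hm h1
  obtain ⟨w₀, hw₀, huniq⟩ := hsq.2 (p w) (q w) (hsq.1 w)
  have e1 := huniq w ⟨rfl, rfl⟩
  have e2 := huniq w' ⟨hww.symm, hq.symm⟩
  exact e1.trans e2.symm

/-- common final step: from a restriction of `u` to the inverse-image subtype,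
produce the unique pullback element. -/
lemma finishPB (hL : IsLaxExtension F Λ) (hN : IsNormal F Λ)
    {P X B A : Type u} (p : P → X) (q : P → B) (f : X → A) (m : B → A)
    (hm : Function.Injective m) (hsq : IsPullbackSq p q f m)
    (u : F.obj X) (v : F.obj B) (hfm : F.map (TypeCat.ofHom f) u = F.map (TypeCat.ofHom m) v)
    (w₀ : F.obj {x : X // ∃ b, m b = f x})
    (hun : F.map (TypeCat.ofHom (Subtype.val : {x : X // ∃ b, m b = f x} → X)) w₀ = u) :
    ∃! w, F.map (TypeCat.ofHom p) w = u ∧ F.map (TypeCat.ofHom q) w = v := by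
  have hψ : ∀ x₀ : {x : X // ∃ b, m b = f x},
      ∃! w, p w = x₀.1 ∧ q w = Classical.choose x₀.2 :=
    fun x₀ => hsq.2 x₀.1 (Classical.choose x₀.2) (Classical.choose_spec x₀.2).symm
  let ψ : {x : X // ∃ b, m b = f x} → P := fun x₀ => Classical.choose (hψ x₀)
  have hψp : ∀ x₀, p (ψ x₀) = x₀.1 := fun x₀ => (Classical.choose_spec (hψ x₀)).1.1
  refine ⟨F.map (TypeCat.ofHom ψ) w₀, ⟨?_, ?_⟩, ?_⟩
  · rw [mapc]
    have : (fun x₀ => p (ψ x₀)) = (Subtype.val : {x : X // ∃ b, m b = f x} → X) :=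
      funext hψp
    rw [this]; exact hun
  · apply nle_inj hL hN m hm
    rw [mapc]
    have : (fun w => m (q w)) = fun w => f (p w) := funext fun w => (hsq.1 w).symm
    rw [this, ← mapc]
    have hpw : F.map (TypeCat.ofHom p) (F.map (TypeCat.ofHom ψ) w₀) = u := by
      rw [mapc]
      have : (fun x₀ => p (ψ x₀)) = (Subtype.val : {x : X // ∃ b, m b = f x} → X) :=
        funext hψp
      rw [this]; exact hun
    rw [hpw]; exact hfm
  · rintro w' ⟨h1, h2⟩
    apply nle_inj hL hN p (pb_p_inj hm hsq)
    rw [h1, mapc]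
    have : (fun x₀ => p (ψ x₀)) = (Subtype.val : {x : X // ∃ b, m b = f x} → X) :=
      funext hψp
    rw [this]; exact hun.symm

/-- the key relation membership shared by the two converse directions -/
lemma key_comp (hL : IsLaxExtension F Λ) {X B A : Type u} (f : X → A) (m : B → A)
    (u : F.obj X) (v : F.obj B) (hfm : F.map (TypeCat.ofHom f) u = F.map (TypeCat.ofHom m) v) :
    Λ.map (relComp (fgraph f) (fun x x' : X => x = x' ∧ ∃ b, m b = f x)) u (F.map (TypeCat.ofHom f) u) := by
  have hfa : Λ.map (fgraph f) u (F.map (TypeCat.ofHom f) u) := (hL.1 f).1 u _ rfl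
  have hma1 : Λ.map (fgraph m) v (F.map (TypeCat.ofHom f) u) := (hL.1 m).1 v _ hfm.symm
  have hma2 : Λ.map (relConv (fgraph m)) (F.map (TypeCat.ofHom f) u) v := (hL.1 m).2 _ v hfm.symm
  have hsA : Λ.map (fun a1 a2 : A => a1 = a2 ∧ ∃ b, m b = a1) (F.map (TypeCat.ofHom f) u) (F.map (TypeCat.ofHom f) u) := by
    have h3 := hL.2 _ _ _ _ ⟨v, hma2, hma1⟩
    refine Λ.mono ?_ _ _ h3
    rintro a1 a2 ⟨b, hb1, hb2⟩
    have hb1' : m b = a1 := hb1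
    exact ⟨hb1'.symm.trans hb2, ⟨b, hb1'⟩⟩
  have hcomp := hL.2 _ _ _ _ ⟨F.map (TypeCat.ofHom f) u, hfa, hsA⟩
  have hrw : (relComp (fun a1 a2 : A => a1 = a2 ∧ ∃ b, m b = a1) (fgraph f))
      = relComp (fgraph f) (fun x x' : X => x = x' ∧ ∃ b, m b = f x) := by
    refine relext fun x a2 => ?_
    constructor
    · rintro ⟨a1, hf, heq, b, hb⟩
      exact ⟨x, ⟨rfl, b, hb.trans hf.symm⟩, hf.trans heq⟩
    · rintro ⟨x', ⟨heq, b, hb⟩, hf⟩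
      subst heq
      exact ⟨f x, rfl, hf, b, hb⟩
  rw [hrw] at hcomp
  exact hcomp

lemma pmc_to_pii (hL : IsLaxExtension F Λ) (hN : IsNormal F Λ)
    (hpm : PreservesPartialMonoComp F Λ) : PreservesInverseImages F := by
  intro P X B A p q f m hm hsq
  refine ⟨?_, ?_⟩
  · intro w
    have hc : (fun w => f (p w)) = fun w => m (q w) := funext hsq.1
    show F.map (TypeCat.ofHom f) (F.map (TypeCat.ofHom p) w) = F.map (TypeCat.ofHom m) (F.map (TypeCat.ofHom q) w)
    rw [mapc, mapc, hc]
  · intro u v hfm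
    have hcomp := key_comp hL f m u v hfm
    have hpmX : IsPartialMono (fun x x' : X => x = x' ∧ ∃ b, m b = f x) := by
      refine ⟨{x : X // ∃ b, m b = f x}, Subtype.val, Subtype.val,
        Subtype.val_injective, Subtype.val_injective, fun y z => ?_⟩
      constructor
      · rintro ⟨rfl, hb⟩; exact ⟨⟨y, hb⟩, rfl, rfl⟩
      · rintro ⟨⟨x, hx⟩, rfl, rfl⟩; exact ⟨rfl, hx⟩
    obtain ⟨x', hsx, hfx⟩ := ((hpm (fgraph f)).2 _ hpmX u (F.map (TypeCat.ofHom f) u)).1 hcomp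
    have hrw2 : (fun x x' : X => x = x' ∧ ∃ b, m b = f x)
        = relComp (fgraph (Subtype.val : {x : X // ∃ b, m b = f x} → X))
            (relConv (fgraph (Subtype.val : {x : X // ∃ b, m b = f x} → X))) := by
      refine relext fun x x' => ?_
      constructor
      · rintro ⟨rfl, hb⟩; exact ⟨⟨x, hb⟩, rfl, rfl⟩
      · rintro ⟨⟨x₀, hx₀⟩, h1, h2⟩
        have h1' : x₀ = x := h1
        have h2' : x₀ = x' := h2
        exact ⟨h1'.symm.trans h2', h1' ▸ hx₀⟩
    rw [hrw2] at hsx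
    have hpmn : IsPartialMono (fgraph (Subtype.val : {x : X // ∃ b, m b = f x} → X)) := by
      refine ⟨{x : X // ∃ b, m b = f x}, fun s => s, Subtype.val,
        fun a b h => h, Subtype.val_injective, fun y z => ?_⟩
      constructor
      · intro h; exact ⟨y, rfl, h⟩
      · rintro ⟨s, rfl, h⟩; exact h
    obtain ⟨w₀, hw1, hw2⟩ := ((hpm (relConv (fgraph _))).1 (fgraph _) hpmn u x').1 hsx
    have hun : F.map (TypeCat.ofHom (Subtype.val : {x : X // ∃ b, m b = f x} → X)) w₀ = u :=
      (nle_conv_iff hL hN _ w₀ u).1 hw1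
    exact finishPB hL hN p q f m hm hsq u v hfm w₀ hun

lemma pei_sid_to_pii (hPEI : PreservesEmptyIntersections F) (hL : IsLaxExtension F Λ)
    (hN : IsNormal F Λ) (hsub : PreservesSubIdComp F Λ) : PreservesInverseImages F := by
  intro P X B A p q f m hm hsq
  refine ⟨?_, ?_⟩
  · intro w
    have hc : (fun w => f (p w)) = fun w => m (q w) := funext hsq.1
    show F.map (TypeCat.ofHom f) (F.map (TypeCat.ofHom p) w) = F.map (TypeCat.ofHom m) (F.map (TypeCat.ofHom q) w)
    rw [mapc, mapc, hc]
  · intro u v hfm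
    have hcomp := key_comp hL f m u v hfm
    have hsubX : IsSubId (fun x x' : X => x = x' ∧ ∃ b, m b = f x) := fun x x' h => h.1
    obtain ⟨x', hsx, hfx⟩ := ((hsub (fgraph f)).1 _ hsubX u (F.map (TypeCat.ofHom f) u)).1 hcomp
    by_cases hne : Nonempty {x : X // ∃ b, m b = f x}
    · -- nonempty case: retraction extraction
      let ρ : X → {x : X // ∃ b, m b = f x} := fun x =>
        if h : ∃ b, m b = f x then ⟨x, h⟩ else Classical.choice hne
      have hk : ∀ x x', (fun x x' : X => x = x' ∧ ∃ b, m b = f x) x x' →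
          (fun x : X => x) x = (fun x' => (ρ x' : X)) x' := by
        rintro x x' ⟨rfl, hb⟩
        show x = (ρ x : X)
        simp only [ρ, dif_pos hb]
      have hext := nle_cospan hL hN (fun x : X => x) (fun x' => (ρ x' : X)) hk hsx
      rw [mapid] at hext
      have hun : F.map (TypeCat.ofHom (Subtype.val : {x : X // ∃ b, m b = f x} → X)) (F.map (TypeCat.ofHom ρ) x') = u := by
        rw [mapc]; exact hext.symm
      exact finishPB hL hN p q f m hm hsq u v hfm (F.map (TypeCat.ofHom ρ) x') hun
    · -- empty case: use preservation of empty intersections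
      have hk : ∀ x (a2 : A), relComp (fgraph f) (fun x x' : X => x = x' ∧ ∃ b, m b = f x) x a2 →
          (Sum.inl x : X ⊕ A) = Sum.inr a2 := by
        rintro x a2 ⟨x'', ⟨heq, b, hb⟩, -⟩
        exact absurd ⟨⟨x, b, hb⟩⟩ hne
      have key := nle_cospan hL hN Sum.inl Sum.inr hk hcomp
      have sqE : IsPullbackSq (fun e : PEmpty.{u+1} => e.elim) (fun e : PEmpty.{u+1} => e.elim)
          (Sum.inl : X → X ⊕ A) (Sum.inr : A → X ⊕ A) :=
        ⟨fun w => w.elim, fun x b h => (Sum.inl_ne_inr h).elim⟩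
      have hconc := hPEI _ _ Sum.inl Sum.inr Sum.inl_injective Sum.inr_injective
        (fun a b h => Sum.inl_ne_inr h) sqE
      obtain ⟨wE, ⟨hw1, -⟩, -⟩ := hconc.2 u (F.map (TypeCat.ofHom f) u) key
      let τ : PEmpty.{u+1} → {x : X // ∃ b, m b = f x} := fun e => e.elim
      have hun : F.map (TypeCat.ofHom (Subtype.val : {x : X // ∃ b, m b = f x} → X)) (F.map (TypeCat.ofHom τ) wE) = u := by
        rw [mapc]
        have : (fun e : PEmpty.{u+1} => ((τ e : {x : X // ∃ b, m b = f x}) : X))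
            = (fun e : PEmpty.{u+1} => e.elim) := funext fun e => e.elim
        rw [this]; exact hw1
      exact finishPB hL hN p q f m hm hsq u v hfm (F.map (TypeCat.ofHom τ) wE) hun

end Converse
section BGsec

open Classical

variable {F : Type u ⥤ Type u}

/-- single-cospan collapsing lemma: if `u, v` match along a cospan `(f, g)` and
`(α, β)` is compatible with the kernel of `(f, g)`, then `u, v` match along `(α, β)`. -/
lemma BGlem (hF : PreservesInverseImages F) {X Y Q V : Type u} (f : X → Q) (g : Y → Q)
    (α : X → V) (β : Y → V) (hk : ∀ x y, f x = g y → α x = β y)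
    {u : F.obj X} {v : F.obj Y} (hm : F.map (TypeCat.ofHom f) u = F.map (TypeCat.ofHom g) v) :
    F.map (TypeCat.ofHom α) u = F.map (TypeCat.ofHom β) v := by
  classical
  have h1 : F.map (TypeCat.ofHom (Subtype.val : ↥(Set.range f) → Q)) (F.map (TypeCat.ofHom (Set.rangeFactorization f)) u)
      = F.map (TypeCat.ofHom (Subtype.val : ↥(Set.range g) → Q)) (F.map (TypeCat.ofHom (Set.rangeFactorization g)) v) := by
    rw [mapc, mapc]; exact hm
  obtain ⟨w, hwf, hwg⟩ := L2 hF (Subtype.val : ↥(Set.range f) → Q)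
    (Subtype.val : ↥(Set.range g) → Q) Subtype.val_injective _ _ h1
  let P₀ : Type u := cpb (Subtype.val : ↥(Set.range f) → Q) (Subtype.val : ↥(Set.range g) → Q)
  let ι : P₀ → Q := fun p => Subtype.val p.1.1
  have hι_inj : Function.Injective ι := by
    intro p p' h
    apply Subtype.ext
    apply Prod.ext
    · exact Subtype.val_injective h
    · apply Subtype.val_injective
      rw [← p.2, ← p'.2]; exact h
  have hιw_f : F.map (TypeCat.ofHom ι) w = F.map (TypeCat.ofHom f) u := by
    calc F.map (TypeCat.ofHom ι) w
        = F.map (TypeCat.ofHom (Subtype.val : ↥(Set.range f) → Q)) (F.map (TypeCat.ofHom (fun p : P₀ => p.1.1)) w) :=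
          (mapc F (fun p : P₀ => p.1.1) Subtype.val w).symm
      _ = F.map (TypeCat.ofHom (Subtype.val : ↥(Set.range f) → Q)) (F.map (TypeCat.ofHom (Set.rangeFactorization f)) u) := by
          rw [hwf]
      _ = F.map (TypeCat.ofHom f) u := by rw [mapc]; rfl
  have hιw_g : F.map (TypeCat.ofHom ι) w = F.map (TypeCat.ofHom g) v := by
    have e : ι = fun p : P₀ => Subtype.val p.1.2 := funext fun p => p.2
    calc F.map (TypeCat.ofHom ι) w
        = F.map (TypeCat.ofHom (Subtype.val : ↥(Set.range g) → Q)) (F.map (TypeCat.ofHom (fun p : P₀ => p.1.2)) w) := by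
          rw [e]; exact (mapc F (fun p : P₀ => p.1.2) Subtype.val w).symm
      _ = F.map (TypeCat.ofHom (Subtype.val : ↥(Set.range g) → Q)) (F.map (TypeCat.ofHom (Set.rangeFactorization g)) v) := by
          rw [hwg]
      _ = F.map (TypeCat.ofHom g) v := by rw [mapc]; rfl
  let δ : P₀ → V := fun p => α (Classical.choose p.1.1.2)
  have hδspec : ∀ p : P₀, f (Classical.choose p.1.1.2) = ι p :=
    fun p => Classical.choose_spec p.1.1.2
  have hδg : ∀ (p : P₀) (y : Y), g y = ι p → δ p = β y := by
    intro p y hy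
    exact hk _ y ((hδspec p).trans hy.symm)
  obtain ⟨ub, hub1, hub2⟩ := L2 hF f ι hι_inj u w hιw_f.symm
  have keyu : (fun e : cpb f ι => α e.1.1) = fun e : cpb f ι => δ e.1.2 := by
    funext e
    obtain ⟨y₀, hy₀⟩ := e.1.2.1.2.2
    have hgι : g y₀ = ι e.1.2 := hy₀.trans e.1.2.2.symm
    have h1 : α e.1.1 = β y₀ := hk _ _ (e.2.trans hgι.symm)
    have h2 : δ e.1.2 = β y₀ := hδg e.1.2 y₀ hgι
    exact h1.trans h2.symm
  have hαu : F.map (TypeCat.ofHom α) u = F.map (TypeCat.ofHom δ) w := by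
    calc F.map (TypeCat.ofHom α) u = F.map (TypeCat.ofHom α) (F.map (TypeCat.ofHom (fun e : cpb f ι => e.1.1)) ub) := by rw [hub1]
      _ = F.map (TypeCat.ofHom (fun e : cpb f ι => α e.1.1)) ub := mapc F _ α ub
      _ = F.map (TypeCat.ofHom (fun e : cpb f ι => δ e.1.2)) ub := by rw [keyu]
      _ = F.map (TypeCat.ofHom δ) (F.map (TypeCat.ofHom (fun e : cpb f ι => e.1.2)) ub) := (mapc F _ δ ub).symm
      _ = F.map (TypeCat.ofHom δ) w := by rw [hub2]
  obtain ⟨vb, hvb1, hvb2⟩ := L2 hF g ι hι_inj v w hιw_g.symm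
  have keyv : (fun e : cpb g ι => β e.1.1) = fun e : cpb g ι => δ e.1.2 := by
    funext e
    exact (hδg e.1.2 e.1.1 e.2).symm
  have hβv : F.map (TypeCat.ofHom β) v = F.map (TypeCat.ofHom δ) w := by
    calc F.map (TypeCat.ofHom β) v = F.map (TypeCat.ofHom β) (F.map (TypeCat.ofHom (fun e : cpb g ι => e.1.1)) vb) := by rw [hvb1]
      _ = F.map (TypeCat.ofHom (fun e : cpb g ι => β e.1.1)) vb := mapc F _ β vb
      _ = F.map (TypeCat.ofHom (fun e : cpb g ι => δ e.1.2)) vb := by rw [keyv]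
      _ = F.map (TypeCat.ofHom δ) (F.map (TypeCat.ofHom (fun e : cpb g ι => e.1.2)) vb) := (mapc F _ δ vb).symm
      _ = F.map (TypeCat.ofHom δ) w := by rw [hvb2]
  rw [hαu, hβv]

end BGsec
section Zig

open Classical

/-- the least lax extension: zigzags of cospans -/
inductive ZZ (F : Type u ⥤ Type u) : ∀ (X Y : Type u), (X → Y → Prop) → F.obj X → F.obj Y → Prop where
  | base : ∀ {X Y Q : Type u} (r : X → Y → Prop) (f : X → Q) (g : Y → Q)
      (u : F.obj X) (v : F.obj Y),
      (∀ x y, f x = g y → r x y) → F.map (TypeCat.ofHom f) u = F.map (TypeCat.ofHom g) v → ZZ F X Y r u v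
  | comp : ∀ {X Y Z : Type u} (r : X → Y → Prop) (s : Y → Z → Prop) (t : X → Z → Prop)
      (u : F.obj X) (v : F.obj Y) (w : F.obj Z),
      (∀ x z, (∃ y, r x y ∧ s y z) → t x z) →
      ZZ F X Y r u v → ZZ F Y Z s v w → ZZ F X Z t u w

variable {F : Type u ⥤ Type u}

lemma zz_mono {X Y : Type u} {r s : X → Y → Prop} {u v}
    (h : ZZ F X Y r u v) (hrs : ∀ x y, r x y → s x y) : ZZ F X Y s u v := by
  revert s
  induction h with
  | base r f g u v hk hm =>
    intro s hrs
    exact .base s f g u v (fun x y hf => hrs _ _ (hk x y hf)) hm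
  | comp r s' t u v w hb h1 h2 ih1 ih2 =>
    intro t' ht
    exact .comp r s' t' u v w (fun x z hx => ht _ _ (hb x z hx)) h1 h2

/-- flattened zigzags carrying the exact composite of the cospan kernels -/
inductive Flat (F : Type u ⥤ Type u) : ∀ (X Y : Type u), (X → Y → Prop) → F.obj X → F.obj Y → Prop where
  | single : ∀ {X Y Q : Type u} (f : X → Q) (g : Y → Q) (u : F.obj X) (v : F.obj Y),
      F.map (TypeCat.ofHom f) u = F.map (TypeCat.ofHom g) v → Flat F X Y (fun x y => f x = g y) u v
  | cons : ∀ {X W Y Q : Type u} (R : W → Y → Prop) (f : X → Q) (g : W → Q)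
      (u : F.obj X) (w : F.obj W) (v : F.obj Y),
      F.map (TypeCat.ofHom f) u = F.map (TypeCat.ofHom g) w → Flat F W Y R w v →
      Flat F X Y (relComp R (fun x y => f x = g y)) u v

/-- flattened zigzags with all middles having one-step predecessors -/
inductive FlatP (F : Type u ⥤ Type u) : ∀ (X Y : Type u), (X → Y → Prop) → F.obj X → F.obj Y → Prop where
  | single : ∀ {X Y Q : Type u} (f : X → Q) (g : Y → Q) (u : F.obj X) (v : F.obj Y),
      F.map (TypeCat.ofHom f) u = F.map (TypeCat.ofHom g) v → FlatP F X Y (fun x y => f x = g y) u v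
  | cons : ∀ {X W Y Q : Type u} (R : W → Y → Prop) (f : X → Q) (g : W → Q)
      (u : F.obj X) (w : F.obj W) (v : F.obj Y),
      F.map (TypeCat.ofHom f) u = F.map (TypeCat.ofHom g) w → (∀ y : W, ∃ x, f x = g y) → FlatP F W Y R w v →
      FlatP F X Y (relComp R (fun x y => f x = g y)) u v

/-- fully reduced flattened zigzags: middles have one-step predecessors and
full forward chains -/
inductive RFlat (F : Type u ⥤ Type u) : ∀ (X Y : Type u), (X → Y → Prop) → F.obj X → F.obj Y → Prop where
  | single : ∀ {X Y Q : Type u} (f : X → Q) (g : Y → Q) (u : F.obj X) (v : F.obj Y),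
      F.map (TypeCat.ofHom f) u = F.map (TypeCat.ofHom g) v → RFlat F X Y (fun x y => f x = g y) u v
  | cons : ∀ {X W Y Q : Type u} (R : W → Y → Prop) (f : X → Q) (g : W → Q)
      (u : F.obj X) (w : F.obj W) (v : F.obj Y),
      F.map (TypeCat.ofHom f) u = F.map (TypeCat.ofHom g) w → (∀ y : W, ∃ x, f x = g y) → (∀ y : W, ∃ z, R y z) →
      RFlat F W Y R w v →
      RFlat F X Y (relComp R (fun x y => f x = g y)) u v

lemma relComp_assoc {X Y Z W : Type u} (K : X → Y → Prop) (R : Y → Z → Prop) (S : Z → W → Prop) :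
    relComp (relComp S R) K = relComp S (relComp R K) := by
  refine relext fun x w => ?_
  constructor
  · rintro ⟨y, hK, z, hR, hS⟩
    exact ⟨z, ⟨y, hK, hR⟩, hS⟩
  · rintro ⟨z, ⟨y, hK, hR⟩, hS⟩
    exact ⟨y, hK, z, hR, hS⟩

lemma flat_append : ∀ {X W : Type u} {R₁ : X → W → Prop} {u w}, Flat F X W R₁ u w →
    ∀ {Y : Type u} {R₂ : W → Y → Prop} {v}, Flat F W Y R₂ w v →
    Flat F X Y (relComp R₂ R₁) u v := by
  intro X W R₁ u w h
  induction h with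
  | single f g u w hm =>
    intro Y R₂ v h2
    exact .cons R₂ f g u w v hm h2
  | cons R f g u w' v' hm tail ih =>
    intro Y R₂ v h2
    have := Flat.cons (relComp R₂ R) f g u w' v hm (ih h2)
    rwa [relComp_assoc] at this

lemma zz_flat {X Y : Type u} {r : X → Y → Prop} {u v} (h : ZZ F X Y r u v) :
    ∃ R, (∀ x y, R x y → r x y) ∧ Flat F X Y R u v := by
  induction h with
  | base r f g u v hk hm => exact ⟨_, hk, .single f g u v hm⟩
  | comp r s t u v w hb h1 h2 ih1 ih2 =>
    obtain ⟨R₁, hR₁, hf1⟩ := ih1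
    obtain ⟨R₂, hR₂, hf2⟩ := ih2
    exact ⟨relComp R₂ R₁,
      fun x z hx => hb x z (by obtain ⟨y, hy1, hy2⟩ := hx; exact ⟨y, hR₁ _ _ hy1, hR₂ _ _ hy2⟩),
      flat_append hf1 hf2⟩

/-- first reduction pass: restrict every middle to elements with a one-step
predecessor, with an arbitrary precomposition built in -/
lemma pass1 (hF : PreservesInverseImages F) :
    ∀ {W Y : Type u} {R : W → Y → Prop} {w v}, Flat F W Y R w v →
    ∀ {W₀ : Type u} (m : W₀ → W) (w₀ : F.obj W₀), F.map (TypeCat.ofHom m) w₀ = w →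
    ∃ R' : W₀ → Y → Prop, (∀ a y, R' a y → R (m a) y) ∧ FlatP F W₀ Y R' w₀ v := by
  intro W Y R w v h
  induction h with
  | single f g w v hm =>
    intro W₀ m w₀ hw
    refine ⟨fun a y => f (m a) = g y, fun a y h => h, ?_⟩
    have hm' : F.map (TypeCat.ofHom (fun a => f (m a))) w₀ = F.map (TypeCat.ofHom g) v := by
      rw [← mapc, hw, hm]
    exact .single _ g w₀ v hm'
  | cons R f g u w' v hm tail ih =>
    intro W₀ m w₀ hw
    have h1 : F.map (TypeCat.ofHom g) w' = F.map (TypeCat.ofHom (Subtype.val : ↥(Set.range (fun a => f (m a))) → _))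
        (F.map (TypeCat.ofHom (Set.rangeFactorization (fun a => f (m a)))) w₀) := by
      rw [mapc]
      show F.map (TypeCat.ofHom g) w' = F.map (TypeCat.ofHom (fun a => f (m a))) w₀
      calc F.map (TypeCat.ofHom g) w' = F.map (TypeCat.ofHom f) u := hm.symm
        _ = F.map (TypeCat.ofHom f) (F.map (TypeCat.ofHom m) w₀) := by rw [hw]
        _ = F.map (TypeCat.ofHom (fun a => f (m a))) w₀ := mapc F m f w₀
    obtain ⟨w₁, hw₁g, hw₁r⟩ := L2 hF g (Subtype.val : ↥(Set.range (fun a => f (m a))) → _)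
      Subtype.val_injective w' _ h1
    obtain ⟨R', hR', htail⟩ := ih (fun p => p.1.1) w₁ hw₁g
    refine ⟨relComp R' (fun a p => f (m a) = g p.1.1), ?_, ?_⟩
    · rintro a y ⟨p, hker, hR⟩
      exact ⟨p.1.1, hker, hR' _ _ hR⟩
    · refine .cons R' (fun a => f (m a)) (fun p => g p.1.1) w₀ w₁ v ?_ ?_ htail
      · calc F.map (TypeCat.ofHom (fun a => f (m a))) w₀ = F.map (TypeCat.ofHom f) (F.map (TypeCat.ofHom m) w₀) := (mapc F m f w₀).symm
          _ = F.map (TypeCat.ofHom f) u := by rw [hw]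
          _ = F.map (TypeCat.ofHom g) w' := hm
          _ = F.map (TypeCat.ofHom g) (F.map (TypeCat.ofHom (fun p => p.1.1)) w₁) := by rw [hw₁g]
          _ = F.map (TypeCat.ofHom (fun p => g p.1.1)) w₁ := mapc F _ g w₁
      · intro p
        obtain ⟨a, ha⟩ := p.1.2.2
        exact ⟨a, ha.trans p.2.symm⟩

/-- restricting the left end of a reduced zigzag to the domain of its relation -/
lemma dom_restrict (hF : PreservesInverseImages F) :
    ∀ {W Y : Type u} {S : W → Y → Prop} {w v}, RFlat F W Y S w v →
    ∃ (W₁ : Type u) (m₁ : W₁ → W) (w₁ : F.obj W₁) (S₁ : W₁ → Y → Prop),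
      F.map (TypeCat.ofHom m₁) w₁ = w ∧ (∀ a y, S₁ a y ↔ S (m₁ a) y) ∧ (∀ a, ∃ y, S₁ a y) ∧
      RFlat F W₁ Y S₁ w₁ v := by
  intro W Y S w v h
  cases h with
  | single f g u v hm =>
    have h1 : F.map (TypeCat.ofHom f) w = F.map (TypeCat.ofHom (Subtype.val : ↥(Set.range g) → _))
        (F.map (TypeCat.ofHom (Set.rangeFactorization g)) v) := by
      rw [mapc]; exact hm
    obtain ⟨w₁, hw₁, -⟩ := L2 hF f (Subtype.val : ↥(Set.range g) → _)
      Subtype.val_injective w _ h1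
    refine ⟨cpb f (Subtype.val : ↥(Set.range g) → _),
      (fun p : cpb f (Subtype.val : ↥(Set.range g) → _) => p.1.1), w₁,
      fun a y => f a.1.1 = g y, hw₁, fun a y => Iff.rfl, ?_, ?_⟩
    · intro a
      obtain ⟨y, hy⟩ := a.1.2.2
      exact ⟨y, a.2.trans hy.symm⟩
    · have hm' : F.map (TypeCat.ofHom (fun p => f p.1.1)) w₁ = F.map (TypeCat.ofHom g) v := by
        calc F.map (TypeCat.ofHom (fun p => f p.1.1)) w₁ = F.map (TypeCat.ofHom f) (F.map (TypeCat.ofHom (fun p => p.1.1)) w₁) :=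
            (mapc F _ f w₁).symm
          _ = F.map (TypeCat.ofHom f) w := by rw [hw₁]
          _ = F.map (TypeCat.ofHom g) v := hm
      exact .single (fun p => f p.1.1) g w₁ v hm'
  | cons R f g u w' v hm hpred hsucc tail =>
    have h1 : F.map (TypeCat.ofHom f) w = F.map (TypeCat.ofHom (Subtype.val : ↥(Set.range g) → _))
        (F.map (TypeCat.ofHom (Set.rangeFactorization g)) w') := by
      rw [mapc]; exact hm
    obtain ⟨w₁, hw₁, -⟩ := L2 hF f (Subtype.val : ↥(Set.range g) → _)
      Subtype.val_injective w _ h1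
    refine ⟨cpb f (Subtype.val : ↥(Set.range g) → _),
      (fun p : cpb f (Subtype.val : ↥(Set.range g) → _) => p.1.1), w₁,
      relComp R (fun (a : cpb f (Subtype.val : ↥(Set.range g) → _)) y' => f a.1.1 = g y'), hw₁,
      fun a y => Iff.rfl, ?_, ?_⟩
    · intro a
      obtain ⟨y', hy'⟩ := a.1.2.2
      obtain ⟨z, hz⟩ := hsucc y'
      exact ⟨z, y', a.2.trans hy'.symm, hz⟩
    · have hm' : F.map (TypeCat.ofHom (fun p => f p.1.1)) w₁ = F.map (TypeCat.ofHom g) w' := by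
        calc F.map (TypeCat.ofHom (fun p => f p.1.1)) w₁ = F.map (TypeCat.ofHom f) (F.map (TypeCat.ofHom (fun p => p.1.1)) w₁) :=
            (mapc F _ f w₁).symm
          _ = F.map (TypeCat.ofHom f) w := by rw [hw₁]
          _ = F.map (TypeCat.ofHom g) w' := hm
      refine .cons R (fun p => f p.1.1) g w₁ w' v hm' ?_ hsucc tail
      intro y'
      obtain ⟨x, hx⟩ := hpred y'
      exact ⟨⟨⟨x, ⟨g y', ⟨y', rfl⟩⟩⟩, hx⟩, hx⟩

/-- second reduction pass: ensure all middles have full forward chains -/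
lemma pass2 (hF : PreservesInverseImages F) :
    ∀ {X Y : Type u} {R : X → Y → Prop} {u v}, FlatP F X Y R u v →
    ∃ R', (∀ x y, R' x y → R x y) ∧ RFlat F X Y R' u v := by
  intro X Y R u v h
  induction h with
  | single f g u v hm => exact ⟨_, fun x y hh => hh, .single f g u v hm⟩
  | cons R f g u w v hm hpred tail ih =>
    obtain ⟨R'', hR'', htail⟩ := ih
    obtain ⟨W₁, m₁, w₁, S₁, hw₁, hiff, hdom, hR1⟩ := dom_restrict hF htail
    refine ⟨relComp S₁ (fun x a => f x = g (m₁ a)), ?_, ?_⟩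
    · rintro x y ⟨a, hker, hS⟩
      exact ⟨m₁ a, hker, hR'' _ _ ((hiff a y).1 hS)⟩
    · refine .cons S₁ f (fun a => g (m₁ a)) u w₁ v ?_ ?_ hdom hR1
      · calc F.map (TypeCat.ofHom f) u = F.map (TypeCat.ofHom g) w := hm
          _ = F.map (TypeCat.ofHom g) (F.map (TypeCat.ofHom m₁) w₁) := by rw [hw₁]
          _ = F.map (TypeCat.ofHom (fun a => g (m₁ a))) w₁ := mapc F m₁ g w₁
      · intro a
        obtain ⟨x, hx⟩ := hpred (m₁ a)
        exact ⟨x, hx⟩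

/-- collapsing theorem for reduced zigzags -/
lemma collapse (hF : PreservesInverseImages F) :
    ∀ {X Y : Type u} {R : X → Y → Prop} {u v}, RFlat F X Y R u v →
    ∀ {V : Type u} (α : X → V) (β : Y → V), (∀ x y, R x y → α x = β y) →
    F.map (TypeCat.ofHom α) u = F.map (TypeCat.ofHom β) v := by
  intro X Y R u v h
  induction h with
  | single f g u v hm =>
    intro V α β hk
    exact BGlem hF f g α β hk hm
  | cons R f g u w v hm hpred hsucc tail ih =>
    intro V α β hk
    have hγ : ∀ y, f (Classical.choose (hpred y)) = g y := fun y => Classical.choose_spec (hpred y)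
    have claim2 : ∀ x y, f x = g y → α x = (fun y => α (Classical.choose (hpred y))) y := by
      intro x y hf
      obtain ⟨z, hz⟩ := hsucc y
      have h1 : α x = β z := hk x z ⟨y, hf, hz⟩
      have h2 : α (Classical.choose (hpred y)) = β z := hk _ z ⟨y, hγ y, hz⟩
      exact h1.trans h2.symm
    have claim1 : ∀ y z, R y z → (fun y => α (Classical.choose (hpred y))) y = β z :=
      fun y z hR => hk _ z ⟨y, hγ y, hR⟩
    exact (BGlem hF f g α (fun y => α (Classical.choose (hpred y))) claim2 hm).trans
      (ih (fun y => α (Classical.choose (hpred y))) β claim1)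

lemma zz_norm (hF : PreservesInverseImages F) {X : Type u} {u v : F.obj X}
    (h : ZZ F X X (@Eq X) u v) : u = v := by
  obtain ⟨R, hR, hflat⟩ := zz_flat h
  obtain ⟨R', hR', hP⟩ := pass1 hF hflat (fun x => x) u (mapid F u)
  obtain ⟨R'', hR'', hRf⟩ := pass2 hF hP
  have := collapse hF hRf (fun x => x) (fun x => x)
    (fun x y hxy => hR _ _ (hR' _ _ (hR'' _ _ hxy)))
  rwa [mapid, mapid] at this

/-- the least lax extension as a relator -/
def zzRel (F : Type u ⥤ Type u) : Relator F where
  map {X Y} r u v := ZZ F X Y r u v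
  mono {X Y r s} hrs u v h := zz_mono h hrs

lemma zz_lax (F : Type u ⥤ Type u) : IsLaxExtension F (zzRel F) := by
  constructor
  · intro X Y f
    constructor
    · intro u v h
      refine ZZ.base (fgraph f) f (fun y => y) u v (fun x y hf => hf) ?_
      rw [mapid]; exact h
    · intro v u h
      refine ZZ.base (relConv (fgraph f)) (fun y => y) f v u (fun y x hf => hf.symm) ?_
      rw [mapid]; exact h.symm
  · rintro X Y Z r s u w ⟨v, h1, h2⟩
    exact ZZ.comp r s (relComp s r) u v w (fun x z hx => hx) h1 h2

lemma zz_normal (hF : PreservesInverseImages F) : IsNormal F (zzRel F) := by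
  intro X u v
  constructor
  · exact fun h => zz_norm hF h
  · rintro rfl
    exact ZZ.base (@Eq X) (fun x => x) (fun x => x) u u (fun x y hxy => hxy) rfl

lemma pii_to_exists (hF : PreservesInverseImages F) :
    ∃ Λ : Relator F, IsLaxExtension F Λ ∧ IsNormal F Λ :=
  ⟨zzRel F, zz_lax F, zz_normal hF⟩

end Zig
/-- For a set functor `F`, the following are equivalent:
(1) `F` preserves inverse images;
(2) `F` admits a normal lax extension and every normal lax extension of `F`
preserves composition with partial monomorphisms;
(3) `F` admits a normal lax extension that preserves composition with partial
monomorphisms;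
(4) `F` preserves empty intersections, admits a normal lax extension, and every
normal lax extension of `F` preserves composition with subidentities;
(5) `F` preserves empty intersections and admits a normal lax extension that
preserves composition with subidentities. -/
theorem stmt11 (F : Type u ⥤ Type u) :
    (PreservesInverseImages F ↔
      ((∃ Λ : Relator F, IsLaxExtension F Λ ∧ IsNormal F Λ) ∧
        ∀ Λ : Relator F, IsLaxExtension F Λ → IsNormal F Λ →
          PreservesPartialMonoComp F Λ))
    ∧
    (PreservesInverseImages F ↔
      (∃ Λ : Relator F, IsLaxExtension F Λ ∧ IsNormal F Λ ∧
        PreservesPartialMonoComp F Λ))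
    ∧
    (PreservesInverseImages F ↔
      (PreservesEmptyIntersections F ∧
        (∃ Λ : Relator F, IsLaxExtension F Λ ∧ IsNormal F Λ) ∧
        ∀ Λ : Relator F, IsLaxExtension F Λ → IsNormal F Λ →
          PreservesSubIdComp F Λ))
    ∧
    (PreservesInverseImages F ↔
      (PreservesEmptyIntersections F ∧
        ∃ Λ : Relator F, IsLaxExtension F Λ ∧ IsNormal F Λ ∧
          PreservesSubIdComp F Λ)) := by
  refine ⟨?_, ?_, ?_, ?_⟩
  · constructor
    · intro hF
      exact ⟨pii_to_exists hF, fun Λ hL hN => pii_to_pm hF hL hN⟩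
    · rintro ⟨⟨Λ, hL, hN⟩, hAll⟩
      exact pmc_to_pii hL hN (hAll Λ hL hN)
  · constructor
    · intro hF
      obtain ⟨Λ, hL, hN⟩ := pii_to_exists hF
      exact ⟨Λ, hL, hN, pii_to_pm hF hL hN⟩
    · rintro ⟨Λ, hL, hN, hpm⟩
      exact pmc_to_pii hL hN hpm
  · constructor
    · intro hF
      exact ⟨pii_to_pei hF, pii_to_exists hF,
        fun Λ hL hN => pm_to_subid (pii_to_pm hF hL hN)⟩
    · rintro ⟨hPEI, ⟨Λ, hL, hN⟩, hAll⟩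
      exact pei_sid_to_pii hPEI hL hN (hAll Λ hL hN)
  · constructor
    · intro hF
      obtain ⟨Λ, hL, hN⟩ := pii_to_exists hF
      exact ⟨pii_to_pei hF, Λ, hL, hN, pm_to_subid (pii_to_pm hF hL hN)⟩
    · rintro ⟨hPEI, Λ, hL, hN, hsub⟩
      exact pei_sid_to_pii hPEI hL hN hsub
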